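/- arXiv:2206.07482 — 3 statements merged into one kernel-verified Lean document; each statement's English description precedes it below -/
import Mathlib

section
/- (Kantorovich-type bound) One exact steepest descent step satisfies ‖x₁ − s‖²_A ≤ ((κ − 1)/(κ + 1))² ‖x₀ − s‖²_A, where κ = λmax/λmin is the condition number of A. -/
open Matrix

lemma kantorovich_aux (m M vq w u : ℝ) (hm : 0 < m) (hmM : m ≤ M)
    (hu : 0 < u) (hvq : 0 ≤ vq)
    (hK : u + m * M * vq ≤ (m + M) * w) :
    vq - w ^ 2 / u ≤ ((M / m - 1) / (M / m + 1)) ^ 2 * vq := by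
  have hM : 0 < M := lt_of_lt_of_le hm hmM
  have hMm : 0 < M + m := by linarith
  have hkap : (M / m - 1) / (M / m + 1) = (M - m) / (M + m) := by
    have hb : M / m + 1 ≠ 0 := by positivity
    field_simp
  rw [hkap]
  have hnn : 0 ≤ u + m * M * vq := by positivity
  have h4 : 4 * m * M * u * vq ≤ (m + M) ^ 2 * w ^ 2 := by
    nlinarith [sq_nonneg (u - m * M * vq)]
  have h4' : 4 * m * M * vq ≤ (M + m) ^ 2 * (w ^ 2 / u) := by
    rw [← sub_nonneg]
    have heq : (M + m) ^ 2 * (w ^ 2 / u) - 4 * m * M * vq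
        = ((m + M) ^ 2 * w ^ 2 - 4 * m * M * u * vq) / u := by
      field_simp
      ring
    rw [heq]
    have := sub_nonneg.mpr h4
    positivity
  set q : ℝ := w ^ 2 / u with hq
  rw [div_pow, ← sub_nonneg]
  have heq2 : (M - m) ^ 2 / (M + m) ^ 2 * vq - (vq - q)
      = ((M + m) ^ 2 * q - 4 * m * M * vq) / (M + m) ^ 2 := by
    field_simp
    ring
  rw [heq2]
  exact div_nonneg (sub_nonneg.mpr h4') (by positivity)


theorem kantorovich_sd_bound {N : ℕ} (A : Matrix (Fin N) (Fin N) ℝ)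
    (hA : A.IsSymm) (hApd : A.PosDef) (lammin lammax : ℝ)
    (hmin_eig : Module.End.HasEigenvalue (Matrix.toLin' A) lammin)
    (hmax_eig : Module.End.HasEigenvalue (Matrix.toLin' A) lammax)
    (hmin_le : ∀ μ : ℝ, Module.End.HasEigenvalue (Matrix.toLin' A) μ → lammin ≤ μ)
    (hmax_ge : ∀ μ : ℝ, Module.End.HasEigenvalue (Matrix.toLin' A) μ → μ ≤ lammax)
    (b x₀ : Fin N → ℝ) (hr : b - A *ᵥ x₀ ≠ 0) :
    let κ : ℝ := lammax / lammin
    let s : Fin N → ℝ := A⁻¹ *ᵥ b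
    let r₀ : Fin N → ℝ := b - A *ᵥ x₀
    let x₁ : Fin N → ℝ := x₀ + ((r₀ ⬝ᵥ r₀) / (r₀ ⬝ᵥ (A *ᵥ r₀))) • r₀
    (x₁ - s) ⬝ᵥ (A *ᵥ (x₁ - s)) ≤ ((κ - 1) / (κ + 1)) ^ 2 * ((x₀ - s) ⬝ᵥ (A *ᵥ (x₀ - s))) := by
  intro κ s r₀ x₁
  classical
  have hH : A.IsHermitian := hApd.isHermitian
  have hdp_pos : ∀ v : Fin N → ℝ, v ≠ 0 → 0 < v ⬝ᵥ v := by
    intro v hv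
    have h0 : 0 ≤ v ⬝ᵥ v := by
      simpa [dotProduct] using Finset.sum_nonneg fun i _ => mul_self_nonneg (v i)
    rcases h0.eq_or_lt with h | h
    · exact absurd (dotProduct_self_eq_zero.mp h.symm) hv
    · exact h
  have hsym : ∀ p q : Fin N → ℝ, p ⬝ᵥ (A *ᵥ q) = (A *ᵥ p) ⬝ᵥ q := by
    intro p q
    conv_lhs => rw [dotProduct_mulVec, ← hA, vecMul_transpose]
  -- lammin is positive
  have hm_pos : 0 < lammin := by
    obtain ⟨v, hv⟩ := hmin_eig.exists_hasEigenvector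
    have hv1 : A *ᵥ v = lammin • v := by
      have := Module.End.mem_eigenspace_iff.mp hv.1
      rwa [Matrix.toLin'_apply] at this
    have hpos : 0 < v ⬝ᵥ (A *ᵥ v) := by
      simpa using hApd.dotProduct_mulVec_pos hv.2
    rw [hv1, dotProduct_smul, smul_eq_mul] at hpos
    have hvv := hdp_pos v hv.2
    nlinarith
  have hmM : lammin ≤ lammax := hmin_le _ hmax_eig
  have hM_pos : 0 < lammax := lt_of_lt_of_le hm_pos hmM
  -- eigenvalue bounds
  set lam : Fin N → ℝ := hH.eigenvalues with hlam
  have heig : ∀ i, Module.End.HasEigenvalue (Matrix.toLin' A) (lam i) := by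
    intro i
    apply Module.End.hasEigenvalue_of_hasEigenvector (x := ⇑(hH.eigenvectorBasis i))
    constructor
    · rw [Module.End.mem_eigenspace_iff, Matrix.toLin'_apply, hH.mulVec_eigenvectorBasis]
    · have hnz := hH.eigenvectorBasis.orthonormal.ne_zero i
      intro h
      exact hnz (by ext j; exact congrFun h j)
  have hlam_lb : ∀ i, lammin ≤ lam i := fun i => hmin_le _ (heig i)
  have hlam_ub : ∀ i, lam i ≤ lammax := fun i => hmax_ge _ (heig i)
  have hlam_pos : ∀ i, 0 < lam i := fun i => lt_of_lt_of_le hm_pos (hlam_lb i)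
  -- spectral decomposition
  set U : Matrix (Fin N) (Fin N) ℝ := (hH.eigenvectorUnitary : Matrix (Fin N) (Fin N) ℝ) with hUdef
  have hspec : A = U * diagonal lam * star U := by simpa using hH.spectral_theorem
  have hU1 : U * star U = 1 := mem_unitaryGroup_iff.mp hH.eigenvectorUnitary.2
  have hU2 : star U * U = 1 := mem_unitaryGroup_iff'.mp hH.eigenvectorUnitary.2
  have hd : ∀ a c : Fin N → ℝ, (U *ᵥ a) ⬝ᵥ (U *ᵥ c) = a ⬝ᵥ c := by
    intro a c
    rw [dotProduct_mulVec, ← mulVec_transpose, mulVec_mulVec,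
      show Uᵀ = star U from rfl, hU2, one_mulVec]
  have hAU : ∀ x : Fin N → ℝ, A *ᵥ (U *ᵥ x) = U *ᵥ (diagonal lam *ᵥ x) := by
    intro x
    conv_lhs => rw [hspec]
    rw [mulVec_mulVec, mul_assoc (U * diagonal lam), hU2, mul_one, ← mulVec_mulVec]
  -- s solves A s = b
  have hAs : A *ᵥ s = b := by
    show A *ᵥ (A⁻¹ *ᵥ b) = b
    rw [mulVec_mulVec, Matrix.mul_nonsing_inv _ (Matrix.isUnit_iff_isUnit_det _ |>.1 hApd.isUnit),
      one_mulVec]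
  set e : Fin N → ℝ := x₀ - s with he
  have hAe : A *ᵥ e = -r₀ := by
    show A *ᵥ (x₀ - s) = -(b - A *ᵥ x₀)
    rw [mulVec_sub, hAs]; abel
  -- coordinates
  set c : Fin N → ℝ := star U *ᵥ e with hc
  have hUc : U *ᵥ c = e := by
    rw [hc, mulVec_mulVec, hU1, one_mulVec]
  have hAe2 : A *ᵥ e = U *ᵥ (diagonal lam *ᵥ c) := by
    conv_lhs => rw [← hUc]
    rw [hAU]
  have hA2e : A *ᵥ (A *ᵥ e) = U *ᵥ (diagonal lam *ᵥ (diagonal lam *ᵥ c)) := by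
    rw [hAe2, hAU]
  -- the three quadratic forms as sums
  set vq : ℝ := ∑ i, lam i * c i ^ 2 with hvq
  set w : ℝ := ∑ i, lam i ^ 2 * c i ^ 2 with hwdef
  set u : ℝ := ∑ i, lam i ^ 3 * c i ^ 2 with hudef
  have hd1 : e ⬝ᵥ (A *ᵥ e) = vq := by
    rw [hAe2]
    conv_lhs => rw [← hUc]
    rw [hd, hvq]
    simp only [dotProduct, mulVec_diagonal]
    exact Finset.sum_congr rfl fun i _ => by ring
  have hd2 : (A *ᵥ e) ⬝ᵥ (A *ᵥ e) = w := by
    rw [hAe2, hd, hwdef]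
    simp only [dotProduct, mulVec_diagonal]
    exact Finset.sum_congr rfl fun i _ => by ring
  have hd3 : (A *ᵥ e) ⬝ᵥ (A *ᵥ (A *ᵥ e)) = u := by
    rw [hA2e, hAe2, hd, hudef]
    simp only [dotProduct, mulVec_diagonal]
    exact Finset.sum_congr rfl fun i _ => by ring
  -- relations to r₀
  have hr0 : r₀ = -(A *ᵥ e) := by rw [hAe, neg_neg]
  have hww : r₀ ⬝ᵥ r₀ = w := by rw [hr0, neg_dotProduct, dotProduct_neg, neg_neg, hd2]
  have huu : r₀ ⬝ᵥ (A *ᵥ r₀) = u := by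
    rw [hr0, mulVec_neg, neg_dotProduct, dotProduct_neg, neg_neg, hd3]
  -- positivity
  have hw_pos : 0 < w := by rw [← hww]; exact hdp_pos r₀ hr
  have hc2nn : ∀ i : Fin N, 0 ≤ c i ^ 2 := fun i => sq_nonneg _
  have hu_ge : lammin * w ≤ u := by
    rw [hwdef, hudef, Finset.mul_sum]
    refine Finset.sum_le_sum fun i _ => ?_
    have h1 := hlam_lb i
    have h2 := hc2nn i
    nlinarith [mul_nonneg (mul_nonneg (sq_nonneg (lam i)) h2) (sub_nonneg.mpr h1)]
  have hu_pos : 0 < u := lt_of_lt_of_le (mul_pos hm_pos hw_pos) hu_ge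
  have hvq_nn : 0 ≤ vq := by
    rw [hvq]
    exact Finset.sum_nonneg fun i _ => mul_nonneg (hlam_pos i).le (hc2nn i)
  -- Kantorovich key inequality
  have hK : u + lammin * lammax * vq ≤ (lammin + lammax) * w := by
    rw [hvq, hwdef, hudef, Finset.mul_sum, Finset.mul_sum, ← Finset.sum_add_distrib]
    refine Finset.sum_le_sum fun i _ => ?_
    have h1 := hlam_lb i
    have h2 := hlam_ub i
    have h3 := hc2nn i
    have h0 := hlam_pos i
    nlinarith [mul_nonneg (mul_nonneg (mul_nonneg h0.le h3) (sub_nonneg.mpr h1))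
      (sub_nonneg.mpr h2)]
  -- compute LHS
  have hx1 : x₁ - s = e + (w / u) • r₀ := by
    show (x₀ + ((r₀ ⬝ᵥ r₀) / (r₀ ⬝ᵥ (A *ᵥ r₀))) • r₀) - s = (x₀ - s) + (w / u) • r₀
    rw [hww, huu]; abel
  have hcross1 : e ⬝ᵥ (A *ᵥ r₀) = -w := by
    rw [hsym, hAe, neg_dotProduct, dotProduct_comm, hww]
  have hcross2 : r₀ ⬝ᵥ (A *ᵥ e) = -w := by
    rw [hAe, dotProduct_neg, hww]
  have hLHS : (x₁ - s) ⬝ᵥ (A *ᵥ (x₁ - s)) = vq - w ^ 2 / u := by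
    rw [hx1, mulVec_add, mulVec_smul, add_dotProduct, smul_dotProduct,
      dotProduct_add, dotProduct_add, dotProduct_smul, dotProduct_smul,
      hd1, hcross1, hcross2, huu, smul_eq_mul, smul_eq_mul, smul_eq_mul]
    field_simp
    ring
  rw [hLHS, hd1]
  exact kantorovich_aux lammin lammax vq w u hm_pos hmM hu_pos hvq_nn hK
end

section
/- (Kantorovich inequality) For A symmetric positive definite with extremal eigenvalues λmin, λmax and any unit vector u, (uᵀAu)(uᵀA⁻¹u) ≤ (λmin + λmax)²/(4 λmin λmax). -/
open Matrix

theorem kantorovich_inequality {N : ℕ} (A : Matrix (Fin N) (Fin N) ℝ)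
    (hA : A.IsSymm) (hApd : A.PosDef) (lammin lammax : ℝ)
    (hmin_eig : Module.End.HasEigenvalue (Matrix.toLin' A) lammin)
    (hmax_eig : Module.End.HasEigenvalue (Matrix.toLin' A) lammax)
    (hmin_le : ∀ μ : ℝ, Module.End.HasEigenvalue (Matrix.toLin' A) μ → lammin ≤ μ)
    (hmax_ge : ∀ μ : ℝ, Module.End.HasEigenvalue (Matrix.toLin' A) μ → μ ≤ lammax)
    (u : Fin N → ℝ) (hu : u ⬝ᵥ u = 1) :
    (u ⬝ᵥ (A *ᵥ u)) * (u ⬝ᵥ (A⁻¹ *ᵥ u)) ≤ (lammin + lammax) ^ 2 / (4 * lammin * lammax) := by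
  classical
  have hH : A.IsHermitian := hApd.1
  set b := hH.eigenvectorBasis with hb
  set lam := hH.eigenvalues with hlam
  -- lammin > 0
  have hmin_pos : 0 < lammin := by
    obtain ⟨v, hv⟩ := hmin_eig.exists_hasEigenvector
    have hvA : A *ᵥ v = lammin • v := by
      have := Module.End.mem_eigenspace_iff.mp hv.1
      simpa [Matrix.toLin'_apply] using this
    have hpos : 0 < v ⬝ᵥ (A *ᵥ v) := by
      have := hApd.dotProduct_mulVec_pos hv.2
      simpa using this
    have hvv : 0 < v ⬝ᵥ v := by
      have hnn : 0 ≤ v ⬝ᵥ v := Finset.sum_nonneg fun i _ => mul_self_nonneg (v i)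
      rcases lt_or_eq_of_le hnn with h | h
      · exact h
      · exact absurd (dotProduct_self_eq_zero.mp h.symm) hv.2
    rw [hvA, dotProduct_smul, smul_eq_mul] at hpos
    by_contra h
    push_neg at h
    nlinarith
  have hminmax : lammin ≤ lammax := hmax_ge lammin hmin_eig
  have hmax_pos : 0 < lammax := lt_of_lt_of_le hmin_pos hminmax
  -- each eigenvalue of the spectral decomposition is an eigenvalue of toLin' A
  have heig : ∀ i, Module.End.HasEigenvalue (Matrix.toLin' A) (lam i) := by
    intro i
    apply Module.End.hasEigenvalue_of_hasEigenvector (x := (b i : Fin N → ℝ))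
    refine ⟨Module.End.mem_eigenspace_iff.mpr ?_, fun h => b.orthonormal.ne_zero i (by ext j; simpa using congrFun h j)⟩
    simpa [Matrix.toLin'_apply] using hH.mulVec_eigenvectorBasis i
  have hlam_lb : ∀ i, lammin ≤ lam i := fun i => hmin_le _ (heig i)
  have hlam_ub : ∀ i, lam i ≤ lammax := fun i => hmax_ge _ (heig i)
  have hlam_pos : ∀ i, 0 < lam i := fun i => lt_of_lt_of_le hmin_pos (hlam_lb i)
  -- coefficients
  set c : Fin N → ℝ := fun i => (b i : Fin N → ℝ) ⬝ᵥ u with hc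
  -- inverse eigen-equation
  have hinv : ∀ i, A⁻¹ *ᵥ (b i : Fin N → ℝ) = (lam i)⁻¹ • (b i : Fin N → ℝ) := by
    intro i
    have hdet : IsUnit A.det := isUnit_iff_isUnit_det A |>.mp hApd.isUnit
    have hAb : A *ᵥ (b i : Fin N → ℝ) = lam i • (b i : Fin N → ℝ) := hH.mulVec_eigenvectorBasis i
    have h1 : A⁻¹ *ᵥ (A *ᵥ (b i : Fin N → ℝ)) = (b i : Fin N → ℝ) := by
      rw [Matrix.mulVec_mulVec, Matrix.nonsing_inv_mul A hdet, Matrix.one_mulVec]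
    rw [hAb, Matrix.mulVec_smul] at h1
    calc A⁻¹ *ᵥ (b i : Fin N → ℝ) = (lam i)⁻¹ • (lam i • (A⁻¹ *ᵥ (b i : Fin N → ℝ))) := by
          rw [smul_smul, inv_mul_cancel₀ (hlam_pos i).ne', one_smul]
      _ = (lam i)⁻¹ • (b i : Fin N → ℝ) := by rw [h1]
  -- symmetry of A⁻¹
  have hAinv_symm : A⁻¹.IsSymm := by
    rw [Matrix.IsSymm, Matrix.transpose_nonsing_inv, hA.eq]
  -- dot product expansions via Parseval
  have key : ∀ (M : Matrix (Fin N) (Fin N) ℝ), M.IsSymm →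
      (∀ i, M *ᵥ (b i : Fin N → ℝ) = (fun i => if True then 0 else 0) i • (b i : Fin N → ℝ)) → True := fun _ _ _ => trivial
  -- general expansion lemma
  have expand : ∀ (M : Matrix (Fin N) (Fin N) ℝ) (d : Fin N → ℝ), M.IsSymm →
      (∀ i, M *ᵥ (b i : Fin N → ℝ) = d i • (b i : Fin N → ℝ)) →
      u ⬝ᵥ (M *ᵥ u) = ∑ i, c i * (d i * c i) := by
    intro M d hMs hMd
    have hpar := b.sum_inner_mul_inner ((WithLp.equiv 2 (Fin N → ℝ)).symm u)
      ((WithLp.equiv 2 (Fin N → ℝ)).symm (M *ᵥ u))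
    have hL : ∀ i, (inner ℝ ((WithLp.equiv 2 (Fin N → ℝ)).symm u) (b i) : ℝ) = c i := by
      intro i
      simp [PiLp.inner_apply, RCLike.inner_apply, hc, dotProduct, mul_comm]
    have hR : ∀ i, (inner ℝ (b i) ((WithLp.equiv 2 (Fin N → ℝ)).symm (M *ᵥ u)) : ℝ)
        = d i * c i := by
      intro i
      have h1 : (inner ℝ (b i) ((WithLp.equiv 2 (Fin N → ℝ)).symm (M *ᵥ u)) : ℝ)
          = (b i : Fin N → ℝ) ⬝ᵥ (M *ᵥ u) := by
        simp [PiLp.inner_apply, RCLike.inner_apply, dotProduct, mul_comm]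
      rw [h1, Matrix.dotProduct_mulVec, ← Matrix.mulVec_transpose, hMs.eq, hMd i,
        smul_dotProduct, smul_eq_mul]
    have h2 : (inner ℝ ((WithLp.equiv 2 (Fin N → ℝ)).symm u)
        ((WithLp.equiv 2 (Fin N → ℝ)).symm (M *ᵥ u)) : ℝ) = u ⬝ᵥ (M *ᵥ u) := by
      simp [PiLp.inner_apply, RCLike.inner_apply, dotProduct, mul_comm]
    rw [h2] at hpar
    rw [← hpar]
    exact Finset.sum_congr rfl fun i _ => by rw [hL i, hR i]
  have hAu : u ⬝ᵥ (A *ᵥ u) = ∑ i, c i * (lam i * c i) :=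
    expand A (fun i => lam i) hA (fun i => hH.mulVec_eigenvectorBasis i)
  have hAinvu : u ⬝ᵥ (A⁻¹ *ᵥ u) = ∑ i, c i * ((lam i)⁻¹ * c i) :=
    expand A⁻¹ (fun i => (lam i)⁻¹) hAinv_symm hinv
  have hsum : ∑ i, c i * c i = 1 := by
    have := expand 1 (fun _ => 1) (Matrix.isSymm_one) (fun i => by simp)
    simpa [hu] using this.symm
  -- arithmetic part
  set a := ∑ i, c i * (lam i * c i) with ha
  set bb := ∑ i, c i * ((lam i)⁻¹ * c i) with hbb
  have ha_lb : lammin ≤ a := by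
    calc lammin = ∑ i, c i * c i * lammin := by rw [← Finset.sum_mul, hsum, one_mul]
    _ ≤ a := by
        apply Finset.sum_le_sum
        intro i _
        have : c i * c i * lammin ≤ c i * c i * lam i :=
          mul_le_mul_of_nonneg_left (hlam_lb i) (mul_self_nonneg _)
        nlinarith [this]
  have ha_pos : 0 < a := lt_of_lt_of_le hmin_pos ha_lb
  have hbb_nonneg : 0 ≤ bb := by
    apply Finset.sum_nonneg
    intro i _
    have := (hlam_pos i)
    have h2 : c i * ((lam i)⁻¹ * c i) = (c i * c i) * (lam i)⁻¹ := by ring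
    rw [h2]
    exact mul_nonneg (mul_self_nonneg _) (inv_nonneg.mpr (hlam_pos i).le)
  have hkey : lammin * lammax * bb ≤ (lammin + lammax) - a := by
    have h1 : (lammin + lammax) - a = ∑ i, c i * c i * (lammin + lammax - lam i) := by
      rw [ha]
      rw [show ∑ i, c i * c i * (lammin + lammax - lam i)
          = (∑ i, c i * c i) * (lammin + lammax) - ∑ i, c i * (lam i * c i) by
        rw [Finset.sum_mul, ← Finset.sum_sub_distrib]
        exact Finset.sum_congr rfl fun i _ => by ring]
      rw [hsum, one_mul]
    have h2 : lammin * lammax * bb = ∑ i, c i * c i * (lammin * lammax * (lam i)⁻¹) := by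
      rw [hbb, Finset.mul_sum]
      exact Finset.sum_congr rfl fun i _ => by ring
    rw [h1, h2]
    apply Finset.sum_le_sum
    intro i _
    apply mul_le_mul_of_nonneg_left _ (mul_self_nonneg _)
    rw [show lammin * lammax * (lam i)⁻¹ = lammin * lammax / lam i by ring,
      div_le_iff₀ (hlam_pos i)]
    nlinarith [mul_nonneg (sub_nonneg.mpr (hlam_lb i)) (sub_nonneg.mpr (hlam_ub i))]
  rw [hAu, hAinvu, le_div_iff₀ (by positivity)]
  nlinarith [mul_le_mul_of_nonneg_left hkey ha_pos.le, sq_nonneg (lammin + lammax - 2 * a),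
    mul_nonneg (mul_nonneg hmin_pos.le hmax_pos.le) hbb_nonneg]
end

section
/- If the error e = x − s is a linear combination of two eigenvectors of A with equal coefficient contributions, steepest descent residuals alternate between two fixed directions: e_{k+2} is a scalar multiple of e_k. -/
open Matrix

theorem sd_two_eigenvector_error_periodic {N : ℕ} (A : Matrix (Fin N) (Fin N) ℝ)
    (hA : A.IsSymm) (hApd : A.PosDef) (v₁ v₂ : Fin N → ℝ) (lam₁ lam₂ : ℝ)
    (hv₁ : A *ᵥ v₁ = lam₁ • v₁) (hv₂ : A *ᵥ v₂ = lam₂ • v₂)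
    (hlam : lam₁ ≠ lam₂)
    (hn₁ : v₁ ⬝ᵥ v₁ = 1) (hn₂ : v₂ ⬝ᵥ v₂ = 1) (horth : v₁ ⬝ᵥ v₂ = 0)
    (c₁ c₂ : ℝ) (hc₁ : c₁ ≠ 0) (hc₂ : c₂ ≠ 0)
    (e : ℕ → (Fin N → ℝ))
    (he0 : e 0 = c₁ • v₁ + c₂ • v₂)
    (hrec : ∀ k : ℕ,
      e (k + 1) = e k -
        (((A *ᵥ e k) ⬝ᵥ (A *ᵥ e k)) / ((A *ᵥ e k) ⬝ᵥ (A *ᵥ (A *ᵥ e k)))) • (A *ᵥ e k)) :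
    ∀ k : ℕ, ∃ c : ℝ, e (k + 2) = c • e k := by
  -- eigenvalues are positive
  have hv₁ne : v₁ ≠ 0 := by
    intro h; rw [h] at hn₁; simp at hn₁
  have hv₂ne : v₂ ≠ 0 := by
    intro h; rw [h] at hn₂; simp at hn₂
  have hlam₁pos : 0 < lam₁ := by
    have h := hApd.dotProduct_mulVec_pos hv₁ne
    rw [hv₁] at h
    simpa [dotProduct_smul, hn₁] using h
  have hlam₂pos : 0 < lam₂ := by
    have h := hApd.dotProduct_mulVec_pos hv₂ne
    rw [hv₂] at h
    simpa [dotProduct_smul, hn₂] using h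
  have horth' : v₂ ⬝ᵥ v₁ = 0 := by rw [dotProduct_comm]; exact horth
  -- action of A on combinations
  have hAe : ∀ a b : ℝ, A *ᵥ (a • v₁ + b • v₂) = (lam₁ * a) • v₁ + (lam₂ * b) • v₂ := by
    intro a b
    rw [mulVec_add, mulVec_smul, mulVec_smul, hv₁, hv₂, smul_smul, smul_smul,
      mul_comm a lam₁, mul_comm b lam₂]
  -- dot products of combinations
  have hdot : ∀ a b c d : ℝ, (a • v₁ + b • v₂) ⬝ᵥ (c • v₁ + d • v₂) = a * c + b * d := by
    intro a b c d
    simp only [add_dotProduct, dotProduct_add, smul_dotProduct, dotProduct_smul,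
      hn₁, hn₂, horth, horth', smul_eq_mul]
    ring
  -- positivity of the denominator
  have hD : ∀ a b : ℝ, a ≠ 0 → b ≠ 0 → 0 < lam₁ ^ 3 * a ^ 2 + lam₂ ^ 3 * b ^ 2 := by
    intro a b ha hb
    have h1 : 0 < lam₁ ^ 3 * a ^ 2 := by positivity
    have h2 : 0 < lam₂ ^ 3 * b ^ 2 := by positivity
    linarith
  -- one step of the recursion
  have hstep : ∀ (k : ℕ) (a b : ℝ), a ≠ 0 → b ≠ 0 → e k = a • v₁ + b • v₂ →
      ∃ a' b' : ℝ, a' ≠ 0 ∧ b' ≠ 0 ∧ e (k + 1) = a' • v₁ + b' • v₂ ∧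
        a' * a * lam₁ ^ 2 = -(b' * b * lam₂ ^ 2) := by
    intro k a b ha hb hek
    set D : ℝ := lam₁ ^ 3 * a ^ 2 + lam₂ ^ 3 * b ^ 2 with hDdef
    have hDpos := hD a b ha hb
    have hDne : D ≠ 0 := ne_of_gt hDpos
    refine ⟨a * b ^ 2 * lam₂ ^ 2 * (lam₂ - lam₁) / D,
      b * a ^ 2 * lam₁ ^ 2 * (lam₁ - lam₂) / D, ?_, ?_, ?_, ?_⟩
    · apply div_ne_zero _ hDne
      have : lam₂ - lam₁ ≠ 0 := sub_ne_zero.mpr (Ne.symm hlam)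
      positivity
    · apply div_ne_zero _ hDne
      have : lam₁ - lam₂ ≠ 0 := sub_ne_zero.mpr hlam
      positivity
    · rw [hrec k, hek, hAe]
      rw [hAe (lam₁ * a) (lam₂ * b)]
      rw [hdot, hdot]
      set α : ℝ := (lam₁ * a * (lam₁ * a) + lam₂ * b * (lam₂ * b)) /
        (lam₁ * a * (lam₁ * (lam₁ * a)) + lam₂ * b * (lam₂ * (lam₂ * b))) with hα
      have hcomb : (a • v₁ + b • v₂) - α • ((lam₁ * a) • v₁ + (lam₂ * b) • v₂)
          = (a - α * (lam₁ * a)) • v₁ + (b - α * (lam₂ * b)) • v₂ := by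
        module
      rw [hcomb]
      have hDne' : lam₁ * a * (lam₁ * (lam₁ * a)) + lam₂ * b * (lam₂ * (lam₂ * b)) ≠ 0 := by
        have : lam₁ * a * (lam₁ * (lam₁ * a)) + lam₂ * b * (lam₂ * (lam₂ * b)) = D := by
          rw [hDdef]; ring
        rw [this]; exact hDne
      have h1 : a - α * (lam₁ * a) = a * b ^ 2 * lam₂ ^ 2 * (lam₂ - lam₁) / D := by
        rw [hα, hDdef]
        field_simp
        ring
      have h2 : b - α * (lam₂ * b) = b * a ^ 2 * lam₁ ^ 2 * (lam₁ - lam₂) / D := by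
        rw [hα, hDdef]
        field_simp
        ring
      rw [h1, h2]
    · field_simp
      ring
  -- representation invariant
  have hrep : ∀ k : ℕ, ∃ a b : ℝ, a ≠ 0 ∧ b ≠ 0 ∧ e k = a • v₁ + b • v₂ := by
    intro k
    induction k with
    | zero => exact ⟨c₁, c₂, hc₁, hc₂, he0⟩
    | succ n ih =>
      obtain ⟨a, b, ha, hb, hek⟩ := ih
      obtain ⟨a', b', ha', hb', hek', _⟩ := hstep n a b ha hb hek
      exact ⟨a', b', ha', hb', hek'⟩
  -- conclude
  intro k
  obtain ⟨a, b, ha, hb, hek⟩ := hrep k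
  obtain ⟨a', b', ha', hb', hek', hrel1⟩ := hstep k a b ha hb hek
  obtain ⟨a'', b'', ha'', hb'', hek'', hrel2⟩ := hstep (k + 1) a' b' ha' hb' hek'
  refine ⟨a'' / a, ?_⟩
  have hcross : a'' * b = b'' * a := by
    have hcancel : a' * lam₁ ^ 2 ≠ 0 := by
      have : lam₁ ≠ 0 := ne_of_gt hlam₁pos
      positivity
    apply mul_right_cancel₀ hcancel
    linear_combination b * hrel2 - b'' * hrel1
  have h1 : a'' / a * a = a'' := by field_simp
  have h2 : a'' / a * b = b'' := by
    field_simp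
    linarith [hcross]
  rw [show k + 2 = k + 1 + 1 from rfl] at hek''
  rw [hek'', hek, smul_add, smul_smul, smul_smul, h1, h2]
end
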